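/- Let X be a real-valued square-integrable random variable that is not almost surely constant, and let 0 < α < β. Every minimizer t of the expectile-loss risk φ(t) = E[α·(max(X − t, 0))² + β·(max(t − X, 0))²] satisfies the strict inequality t < E[X]. -/

import Mathlib

open MeasureTheory

private lemma max_sq_le' (a : ℝ) : (max a 0) ^ 2 ≤ a ^ 2 := by
  rcases le_total a 0 with h | h
  · rw [max_eq_right h]; simpa using sq_nonneg a
  · rw [max_eq_left h]

private lemma abs_max_le' (a : ℝ) : |max a 0| ≤ |a| := by
  rcases le_total a 0 with h | h
  · rw [max_eq_right h]; simp [abs_nonneg]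
  · rw [max_eq_left h]

private lemma max_add_sq' (a δ : ℝ) (hδ : 0 ≤ δ) :
    (max (a + δ) 0) ^ 2 ≤ (max a 0 + δ) ^ 2 := by
  have h1 : max (a + δ) 0 ≤ max a 0 + δ := by
    apply max_le
    · linarith [le_max_left a 0]
    · linarith [le_max_right a 0]
  have h0 : (0:ℝ) ≤ max (a + δ) 0 := le_max_right _ _
  nlinarith

private lemma max_sub_sq' (a δ : ℝ) (hδ : 0 ≤ δ) :
    (max (a - δ) 0) ^ 2 ≤ (max a 0 - δ) ^ 2 := by
  rcases le_total (a - δ) 0 with h | h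
  · rw [max_eq_right h]; simpa using sq_nonneg (max a 0 - δ)
  · rw [max_eq_left (by linarith : (0:ℝ) ≤ a - δ),
      max_eq_left (by linarith : (0:ℝ) ≤ a)]

/-- If X is not a.s. constant and α < β, every minimizer of the
expectile-loss risk satisfies t < E[X] strictly. -/
theorem expectile_risk_min_lt_mean
    {Ω : Type*} [MeasurableSpace Ω] (μ : Measure Ω) [IsProbabilityMeasure μ]
    (X : Ω → ℝ) (hX : MemLp X 2 μ)
    (hnc : ¬ ∃ k : ℝ, X =ᵐ[μ] fun _ => k)
    (α β : ℝ) (hα : 0 < α) (hαβ : α < β)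
    (φ : ℝ → ℝ)
    (hφ : ∀ t, φ t = ∫ ω, (α * (max (X ω - t) 0) ^ 2 + β * (max (t - X ω) 0) ^ 2) ∂μ) :
    ∀ t : ℝ, (∀ s : ℝ, φ t ≤ φ s) → t < ∫ ω, X ω ∂μ := by
  intro t ht
  by_contra hlt
  push_neg at hlt
  set m : ℝ := ∫ ω, X ω ∂μ with hm
  -- hlt : m ≤ t
  set p : Ω → ℝ := fun ω => max (X ω - t) 0 with hp
  set q : Ω → ℝ := fun ω => max (t - X ω) 0 with hq
  have hXi : Integrable X μ := hX.integrable one_le_two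
  have hXt : Integrable (fun ω => X ω - t) μ := hXi.sub (integrable_const t)
  have htX : Integrable (fun ω => t - X ω) μ := (integrable_const t).sub hXi
  have hpm : AEStronglyMeasurable p μ := hXt.1.sup aestronglyMeasurable_const
  have hqm : AEStronglyMeasurable q μ := htX.1.sup aestronglyMeasurable_const
  have hpi : Integrable p μ := by
    refine hXt.mono hpm (Filter.Eventually.of_forall fun ω => ?_)
    simpa [Real.norm_eq_abs] using abs_max_le' (X ω - t)
  have hqi : Integrable q μ := by
    refine htX.mono hqm (Filter.Eventually.of_forall fun ω => ?_)
    simpa [Real.norm_eq_abs] using abs_max_le' (t - X ω)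
  have hg2 : Integrable (fun ω => (X ω - t) ^ 2) μ :=
    (hX.sub (memLp_const t)).integrable_sq
  have hh2 : Integrable (fun ω => (t - X ω) ^ 2) μ :=
    ((memLp_const t).sub hX).integrable_sq
  have hp2 : Integrable (fun ω => p ω ^ 2) μ := by
    refine hg2.mono (hpm.pow 2) (Filter.Eventually.of_forall fun ω => ?_)
    rw [Real.norm_eq_abs, Real.norm_eq_abs, abs_of_nonneg (sq_nonneg (p ω)),
      abs_of_nonneg (sq_nonneg (X ω - t))]
    exact max_sq_le' (X ω - t)
  have hq2 : Integrable (fun ω => q ω ^ 2) μ := by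
    refine hh2.mono (hqm.pow 2) (Filter.Eventually.of_forall fun ω => ?_)
    rw [Real.norm_eq_abs, Real.norm_eq_abs, abs_of_nonneg (sq_nonneg (q ω)),
      abs_of_nonneg (sq_nonneg (t - X ω))]
    exact max_sq_le' (t - X ω)
  set A : ℝ := ∫ ω, p ω ∂μ with hA
  set B : ℝ := ∫ ω, q ω ∂μ with hB
  have hA0 : 0 ≤ A := integral_nonneg fun ω => le_max_right _ _
  have hB0 : 0 ≤ B := integral_nonneg fun ω => le_max_right _ _
  have hqp : ∀ ω, q ω - p ω = t - X ω := by
    intro ω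
    have : p ω = max (-(t - X ω)) 0 := by
      show max (X ω - t) 0 = _
      congr 1
      ring
    rw [this, hq]
    exact max_zero_sub_eq_self (t - X ω)
  have hBA : B - A = t - m := by
    rw [hB, hA, ← integral_sub hqi hpi]
    have : (∫ ω, (q ω - p ω) ∂μ) = ∫ ω, (t - X ω) ∂μ := by
      exact integral_congr_ae (Filter.Eventually.of_forall hqp)
    rw [this, integral_sub (integrable_const t) hXi, integral_const]
    simp [hm]
  have hAB : A ≤ B := by linarith
  have hBpos : 0 < B := by
    rcases lt_or_eq_of_le hB0 with h | h
    · exact h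
    · exfalso
      have hBz : B = 0 := h.symm
      have hAz : A = 0 := le_antisymm (by linarith) hA0
      have hq0 : q =ᵐ[μ] 0 :=
        (integral_eq_zero_iff_of_nonneg (fun ω => le_max_right _ _) hqi).mp hBz
      have hp0 : p =ᵐ[μ] 0 :=
        (integral_eq_zero_iff_of_nonneg (fun ω => le_max_right _ _) hpi).mp hAz
      refine hnc ⟨t, ?_⟩
      filter_upwards [hq0, hp0] with ω h1 h2
      have := hqp ω
      rw [h1, h2] at this
      simp only [Pi.zero_apply, sub_zero, zero_sub] at this ⊢
      linarith [this]
  have hD : 0 < β * B - α * A := by nlinarith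
  set D : ℝ := β * B - α * A with hDdef
  set δ : ℝ := D / (α + β) with hδdef
  have hαβ0 : (0:ℝ) < α + β := by linarith
  have hδ : 0 < δ := div_pos hD hαβ0
  set s : ℝ := t - δ with hs
  -- pointwise bound
  have hpoint : ∀ ω, α * (max (X ω - s) 0) ^ 2 + β * (max (s - X ω) 0) ^ 2 ≤
      α * p ω ^ 2 + β * q ω ^ 2 + 2 * δ * (α * p ω - β * q ω) + (α + β) * δ ^ 2 := by
    intro ω
    have e1 : X ω - s = (X ω - t) + δ := by rw [hs]; ring
    have e2 : s - X ω = (t - X ω) - δ := by rw [hs]; ring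
    have h1 : (max (X ω - s) 0) ^ 2 ≤ (p ω + δ) ^ 2 := by
      rw [e1]; exact max_add_sq' _ _ hδ.le
    have h2 : (max (s - X ω) 0) ^ 2 ≤ (q ω - δ) ^ 2 := by
      rw [e2]; exact max_sub_sq' _ _ hδ.le
    nlinarith [h1, h2]
  -- integrability of the bound
  have i1 : Integrable (fun ω => α * p ω ^ 2 + β * q ω ^ 2) μ :=
    (hp2.const_mul α).add (hq2.const_mul β)
  have i3 : Integrable (fun ω => α * p ω) μ := hpi.const_mul α
  have i4 : Integrable (fun ω => β * q ω) μ := hqi.const_mul β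
  have i2 : Integrable (fun ω => 2 * δ * (α * p ω - β * q ω)) μ :=
    (i3.sub i4).const_mul (2 * δ)
  have i12 : Integrable
      (fun ω => α * p ω ^ 2 + β * q ω ^ 2 + 2 * δ * (α * p ω - β * q ω)) μ := i1.add i2
  have hgI : Integrable
      (fun ω => α * p ω ^ 2 + β * q ω ^ 2 + 2 * δ * (α * p ω - β * q ω) + (α + β) * δ ^ 2) μ :=
    i12.add (integrable_const _)
  have h1 : φ s ≤ ∫ ω, (α * p ω ^ 2 + β * q ω ^ 2 + 2 * δ * (α * p ω - β * q ω)
      + (α + β) * δ ^ 2) ∂μ := by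
    rw [hφ s]
    refine integral_mono_of_nonneg (Filter.Eventually.of_forall fun ω => ?_) hgI
      (Filter.Eventually.of_forall hpoint)
    exact add_nonneg (mul_nonneg hα.le (sq_nonneg _))
      (mul_nonneg (by linarith) (sq_nonneg _))
  have h2 : ∫ ω, (α * p ω ^ 2 + β * q ω ^ 2 + 2 * δ * (α * p ω - β * q ω)
      + (α + β) * δ ^ 2) ∂μ
      = φ t + 2 * δ * (α * A - β * B) + (α + β) * δ ^ 2 := by
    rw [integral_add i12 (integrable_const _), integral_add i1 i2,
      integral_const, integral_const_mul, integral_sub i3 i4,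
      integral_const_mul, integral_const_mul, hφ t]
    simp [hA, hB, measure_univ]
    rfl
  have hkey : 2 * δ * (α * A - β * B) + (α + β) * δ ^ 2 < 0 := by
    have hδD : (α + β) * δ = D := by
      rw [hδdef]; field_simp
    have : 2 * δ * (α * A - β * B) = -2 * δ * D := by rw [hDdef]; ring
    rw [this]
    have h3 : (α + β) * δ ^ 2 = δ * D := by
      rw [pow_two, ← mul_assoc, mul_comm (α + β) δ, mul_assoc, mul_comm δ ((α+β)*δ), hδD]
      ring
    rw [h3]
    nlinarith [hδ, hD]
  have := ht s
  linarith [h1, h2 ▸ h1]
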